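/- Let d ≥ 2 be an integer, α ∈ (1/2, 1), v ∈ ℝᵈ with |v| = 1, and 𝓗 > 0. Then there exists a constant C > 0 such that for all λ ∈ (0,1] and all δ ∈ (0,1], ∫_{ℝᵈ} { λ + (1/λ)[(v·k)² + δ²|k|²𝓗] }^{-1} a(|k|) |k|^{-(2α+d-2)} dk ≥ C λ^{1-2α}. -/

import Mathlib

open MeasureTheory Set Metric
open scoped RealInnerProductSpace

lemma aux_integrableOn_rpow (d : ℕ) (hd : 1 ≤ d) {p : ℝ} (hp : p < 0) (hpd : -(d:ℝ) < p) (R : ℝ) :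
    IntegrableOn (fun x : EuclideanSpace ℝ (Fin d) => ‖x‖ ^ p)
      (Metric.closedBall 0 R) := by
  set E := EuclideanSpace ℝ (Fin d)
  haveI : Nontrivial E := Module.nontrivial_of_finrank_pos
    (R := ℝ) (by rw [finrank_euclideanSpace_fin]; omega)
  rcases le_or_gt R 0 with hR | hR
  · have hnull : volume (Metric.closedBall (0:E) R) = 0 := by
      apply measure_mono_null (t := {(0:E)}) ?_ (measure_singleton _)
      intro x hx
      simp only [Metric.mem_closedBall, dist_zero_right] at hx
      have : ‖x‖ = 0 := le_antisymm (hx.trans hR) (norm_nonneg x)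
      simpa [Set.mem_singleton_iff] using norm_eq_zero.mp this
    rw [IntegrableOn, Measure.restrict_eq_zero.mpr hnull]
    exact integrable_zero_measure
  · set B : ℝ := (volume (Metric.ball (0:E) 1)).toReal with hBdef
    have hB0 : 0 ≤ B := ENNReal.toReal_nonneg
    set s : ℕ → Set E := fun n =>
      Metric.closedBall 0 (R * 2⁻¹ ^ n) \ Metric.ball 0 (R * 2⁻¹ ^ (n+1)) with hsdef
    have hmeas : ∀ n, MeasurableSet (s n) :=
      fun n => measurableSet_closedBall.diff measurableSet_ball
    have hcomp : ∀ n, IsCompact (s n) :=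
      fun n => (isCompact_closedBall _ _).diff isOpen_ball
    have hpos : ∀ n, (0:ℝ) < R * 2⁻¹ ^ (n+1) := fun n => by positivity
    have hIntOn : ∀ n, IntegrableOn (fun x : E => ‖x‖ ^ p) (s n) := by
      intro n
      apply ContinuousOn.integrableOn_compact (hcomp n)
      intro x hx
      have hx0 : ‖x‖ ≠ 0 := by
        have : R * 2⁻¹ ^ (n+1) ≤ ‖x‖ := by
          have := hx.2
          simpa [Metric.mem_ball, dist_zero_right, not_lt] using this
        exact ne_of_gt (lt_of_lt_of_le (hpos n) this)
      exact ((Real.continuousAt_rpow_const _ _ (Or.inl hx0)).comp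
        continuous_norm.continuousAt).continuousWithinAt
    have hbound : ∀ n, (∫ x in s n, ‖(fun x : E => ‖x‖ ^ p) x‖) ≤
        (R * 2⁻¹ ^ (n+1)) ^ p * ((R * 2⁻¹ ^ n) ^ d * B) := by
      intro n
      have h1 : (∫ x in s n, ‖(fun x : E => ‖x‖ ^ p) x‖) ≤
          ∫ _x in s n, (R * 2⁻¹ ^ (n+1)) ^ p := by
        apply setIntegral_mono_on (hIntOn n).norm
          (integrableOn_const (hcomp n).measure_lt_top.ne) (hmeas n)
        intro x hx
        have hxlb : R * 2⁻¹ ^ (n+1) ≤ ‖x‖ := by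
          have := hx.2
          simpa [Metric.mem_ball, dist_zero_right, not_lt] using this
        rw [Real.norm_of_nonneg (Real.rpow_nonneg (norm_nonneg x) p)]
        exact Real.rpow_le_rpow_of_nonpos (hpos n) hxlb hp.le
      have h2 : (∫ _x in s n, (R * 2⁻¹ ^ (n+1)) ^ p) =
          (volume (s n)).toReal * (R * 2⁻¹ ^ (n+1)) ^ p := by
        rw [setIntegral_const, smul_eq_mul, measureReal_def]
      have hvol : volume (Metric.closedBall (0:E) (R * 2⁻¹ ^ n)) =
          ENNReal.ofReal ((R * 2⁻¹ ^ n) ^ d) * volume (Metric.ball (0:E) 1) := by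
        rw [Measure.addHaar_closedBall _ _ (by positivity), finrank_euclideanSpace_fin]
      have h3 : (volume (s n)).toReal ≤ (R * 2⁻¹ ^ n) ^ d * B := by
        have hle : volume (s n) ≤ volume (Metric.closedBall (0:E) (R * 2⁻¹ ^ n)) :=
          measure_mono diff_subset
        have hne : volume (Metric.closedBall (0:E) (R * 2⁻¹ ^ n)) ≠ ⊤ :=
          measure_closedBall_lt_top.ne
        have := ENNReal.toReal_mono hne hle
        calc (volume (s n)).toReal
            ≤ (volume (Metric.closedBall (0:E) (R * 2⁻¹ ^ n))).toReal := this
          _ = (R * 2⁻¹ ^ n) ^ d * B := by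
              rw [hvol, ENNReal.toReal_mul, ENNReal.toReal_ofReal (by positivity)]
      have h4 : (∫ x in s n, ‖(fun x : E => ‖x‖ ^ p) x‖) ≤
          (volume (s n)).toReal * (R * 2⁻¹ ^ (n+1)) ^ p := h2 ▸ h1
      have h5 : (volume (s n)).toReal * (R * 2⁻¹ ^ (n+1)) ^ p ≤
          ((R * 2⁻¹ ^ n) ^ d * B) * (R * 2⁻¹ ^ (n+1)) ^ p :=
        mul_le_mul_of_nonneg_right h3 (Real.rpow_nonneg (hpos n).le p)
      calc (∫ x in s n, ‖(fun x : E => ‖x‖ ^ p) x‖)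
          ≤ ((R * 2⁻¹ ^ n) ^ d * B) * (R * 2⁻¹ ^ (n+1)) ^ p := h4.trans h5
        _ = (R * 2⁻¹ ^ (n+1)) ^ p * ((R * 2⁻¹ ^ n) ^ d * B) := by ring
    -- summability of the bounds
    have hsum : Summable (fun n : ℕ => (R * 2⁻¹ ^ (n+1)) ^ p * ((R * 2⁻¹ ^ n) ^ d * B)) := by
      have hx01 : (0:ℝ) ≤ (2:ℝ)⁻¹ ^ p * 2⁻¹ ^ d := by positivity
      have hx1 : (2:ℝ)⁻¹ ^ p * 2⁻¹ ^ d < 1 := by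
        have : (2:ℝ)⁻¹ ^ p * 2⁻¹ ^ d = (2:ℝ)⁻¹ ^ (p + (d:ℝ)) := by
          rw [Real.rpow_add (by norm_num), Real.rpow_natCast]
        rw [this]
        exact Real.rpow_lt_one (by norm_num) (by norm_num) (by linarith)
      have hgeom : Summable (fun n : ℕ => ((2:ℝ)⁻¹ ^ p * 2⁻¹ ^ d) ^ n) :=
        summable_geometric_of_lt_one hx01 hx1
      have := (hgeom.mul_left (R ^ p * (2:ℝ)⁻¹ ^ p * (R ^ d * B)))
      apply this.congr
      intro n
      have e1 : (R * 2⁻¹ ^ (n+1)) ^ p = R ^ p * ((2:ℝ)⁻¹ ^ p) ^ (n+1) := by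
        rw [Real.mul_rpow hR.le (by positivity), ← Real.rpow_natCast ((2:ℝ)⁻¹) (n+1),
          ← Real.rpow_natCast ((2:ℝ)⁻¹ ^ p) (n+1), ← Real.rpow_mul (by norm_num),
          ← Real.rpow_mul (by norm_num), mul_comm p]
      rw [e1, mul_pow R _ d, mul_pow ((2:ℝ)⁻¹ ^ p) ((2:ℝ)⁻¹ ^ d) n,
        pow_right_comm (2:ℝ)⁻¹ d n]
      ring
    have hunion : IntegrableOn (fun x : E => ‖x‖ ^ p) (⋃ n, s n) :=
      integrableOn_iUnion_of_summable_integral_norm hIntOn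
        (Summable.of_nonneg_of_le
          (fun n => integral_nonneg fun x => norm_nonneg _) hbound hsum)
    -- the union is the closed ball minus the origin
    have hU : (⋃ n, s n) = Metric.closedBall (0:E) R \ {0} := by
      apply Set.Subset.antisymm
      · intro x hx
        obtain ⟨n, hxn⟩ := Set.mem_iUnion.mp hx
        constructor
        · have := hxn.1
          simp only [Metric.mem_closedBall, dist_zero_right] at this ⊢
          calc ‖x‖ ≤ R * 2⁻¹ ^ n := this
            _ ≤ R * 1 := by
                apply mul_le_mul_of_nonneg_left _ hR.le
                apply pow_le_one₀ <;> norm_num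
            _ = R := mul_one R
        · have h2 : R * 2⁻¹ ^ (n+1) ≤ ‖x‖ := by
            have := hxn.2
            simpa [Metric.mem_ball, dist_zero_right, not_lt] using this
          have : (0:ℝ) < ‖x‖ := lt_of_lt_of_le (hpos n) h2
          simp only [Set.mem_singleton_iff]
          intro h0
          rw [h0] at this; simp at this
      · intro x hx
        have hx1 : ‖x‖ ≤ R := by
          have := hx.1; simpa [Metric.mem_closedBall, dist_zero_right] using this
        have hx0 : 0 < ‖x‖ := by
          have : x ≠ 0 := fun h => hx.2 (by simp [h])
          exact norm_pos_iff.mpr this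
        -- find n with R * 2⁻¹^(n+1) ≤ ‖x‖ ≤ R * 2⁻¹^n
        have hexists : ∃ m : ℕ, R * 2⁻¹ ^ (m+1) ≤ ‖x‖ := by
          obtain ⟨m, hm⟩ := exists_pow_lt_of_lt_one (div_pos hx0 hR) (by norm_num : (2:ℝ)⁻¹ < 1)
          exact ⟨m, by
            have h2 : (2:ℝ)⁻¹ ^ (m+1) ≤ 2⁻¹ ^ m :=
              pow_le_pow_of_le_one (by norm_num) (by norm_num) (Nat.le_succ m)
            have := h2.trans hm.le
            calc R * 2⁻¹ ^ (m+1) ≤ R * (‖x‖ / R) := by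
                  apply mul_le_mul_of_nonneg_left this hR.le
              _ = ‖x‖ := by field_simp⟩
        set n := Nat.find hexists with hn
        have hn1 : R * 2⁻¹ ^ (n+1) ≤ ‖x‖ := Nat.find_spec hexists
        have hn2 : ‖x‖ ≤ R * 2⁻¹ ^ n := by
          rcases Nat.eq_zero_or_pos n with h0 | h0
          · rw [h0]; simpa using hx1
          · have := Nat.find_min hexists (m := n - 1) (by omega)
            push_neg at this
            have heq : (n - 1) + 1 = n := by omega
            rw [heq] at this
            exact this.le
        refine Set.mem_iUnion.mpr ⟨n, ?_, ?_⟩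
        · simpa [Metric.mem_closedBall, dist_zero_right] using hn2
        · simpa [Metric.mem_ball, dist_zero_right, not_lt] using hn1
    rw [hU] at hunion
    have : IntegrableOn (fun x : E => ‖x‖ ^ p)
        ((Metric.closedBall (0:E) R \ {0}) ∪ {0}) :=
      hunion.union (by
        rw [IntegrableOn, Measure.restrict_eq_zero.mpr (measure_singleton _)]
        exact integrable_zero_measure)
    apply this.mono_set
    intro x hx
    by_cases h0 : x = 0
    · exact Or.inr (by simp [h0])
    · exact Or.inl ⟨hx, by simp [h0]⟩

lemma aux_integral_rpow_ball (d : ℕ) (hd : 1 ≤ d) {p : ℝ} (hp : p < 0) (hpd : -(d:ℝ) < p)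
    {T : ℝ} (hT : 0 < T) :
    (∫ x : EuclideanSpace ℝ (Fin d),
        Set.indicator (Metric.ball 0 T) (fun x : EuclideanSpace ℝ (Fin d) => ‖x‖ ^ p) x)
      = (d : ℝ) * (volume (Metric.ball (0 : EuclideanSpace ℝ (Fin d)) 1)).toReal *
        (T ^ ((d:ℝ) + p) / ((d:ℝ) + p)) := by
  set E := EuclideanSpace ℝ (Fin d)
  haveI : Nontrivial E := Module.nontrivial_of_finrank_pos
    (R := ℝ) (by rw [finrank_euclideanSpace_fin]; omega)
  set f : ℝ → ℝ := fun y => Set.indicator (Set.Ioo 0 T) (fun y => y ^ p) y with hfdef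
  have hfx : ∀ x : E, Set.indicator (Metric.ball 0 T) (fun x : E => ‖x‖ ^ p) x = f ‖x‖ := by
    intro x
    by_cases hx : ‖x‖ < T
    · rw [Set.indicator_of_mem (by simpa [Metric.mem_ball, dist_zero_right] using hx)]
      by_cases h0 : ‖x‖ = 0
      · rw [hfdef]
        simp only [h0]
        rw [Set.indicator_of_notMem (by simp), Real.zero_rpow hp.ne]
      · rw [hfdef]
        simp only []
        rw [Set.indicator_of_mem (Set.mem_Ioo.mpr ⟨lt_of_le_of_ne (norm_nonneg x) (Ne.symm h0), hx⟩)]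
    · rw [Set.indicator_of_notMem (by simpa [Metric.mem_ball, dist_zero_right] using hx),
        hfdef]
      simp only []
      rw [Set.indicator_of_notMem (by simp [Set.mem_Ioo]; intro h; linarith [not_lt.mp hx])]
  rw [funext hfx]
  rw [MeasureTheory.integral_fun_norm_addHaar (volume : Measure E) f]
  rw [finrank_euclideanSpace_fin]
  -- now compute the inner integral
  have hinner : (∫ y in Set.Ioi (0:ℝ), y ^ (d - 1) • f y)
      = T ^ ((d:ℝ) + p) / ((d:ℝ) + p) := by
    have hfy : ∀ y : ℝ, y ^ (d - 1) • f y
        = Set.indicator (Set.Ioo 0 T) (fun y => y ^ ((d:ℝ) - 1 + p)) y := by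
      intro y
      by_cases hy : y ∈ Set.Ioo (0:ℝ) T
      · rw [hfdef]
        simp only [smul_eq_mul]
        rw [Set.indicator_of_mem hy, Set.indicator_of_mem hy]
        have hy0 : (0:ℝ) < y := hy.1
        rw [← Real.rpow_natCast y (d - 1), Real.rpow_add hy0 ((d:ℝ) - 1) p]
        congr 2
        rw [Nat.cast_sub hd, Nat.cast_one]
      · rw [hfdef]
        simp only [smul_eq_mul]
        rw [Set.indicator_of_notMem hy, Set.indicator_of_notMem hy, mul_zero]
    rw [funext hfy]
    rw [setIntegral_indicator measurableSet_Ioo,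
      Set.inter_eq_self_of_subset_right Set.Ioo_subset_Ioi_self]
    rw [Measure.restrict_congr_set Ioo_ae_eq_Ioc]
    rw [← intervalIntegral.integral_of_le hT.le]
    have hq : (-1:ℝ) < (d:ℝ) - 1 + p := by
      have : (1:ℝ) ≤ (d:ℝ) := by exact_mod_cast hd
      linarith
    rw [integral_rpow (Or.inl hq)]
    have h1 : (d:ℝ) - 1 + p + 1 = (d:ℝ) + p := by ring
    rw [h1, Real.zero_rpow (by linarith), sub_zero]
  rw [hinner, nsmul_eq_mul, smul_eq_mul]
  simp only [measureReal_def]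
  ring



open MeasureTheory
open scoped RealInnerProductSpace

/-- Let `d ≥ 2`, `α ∈ (1/2, 1)`, `v ∈ ℝᵈ` with `|v| = 1`, `𝓗 > 0`, and let
`a : [0,∞) → [0,∞)` be bounded measurable, vanishing beyond `K`, continuous at `0` with
`a(0) = 1`. Then there is `C > 0` such that for all `λ ∈ (0,1]` and `δ ∈ (0,1]`,
`∫_{ℝᵈ} (λ + (1/λ)[(v·k)² + δ²|k|²𝓗])⁻¹ a(|k|) |k|^{-(2α+d-2)} dk ≥ C λ^{1-2α}`. -/
theorem stmt11 (d : ℕ) (hd : 2 ≤ d) (α : ℝ) (hα1 : 1 / 2 < α) (hα2 : α < 1)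
    (K : ℝ) (hK : 0 < K) (a : ℝ → ℝ)
    (ha_nonneg : ∀ r : ℝ, 0 ≤ r → 0 ≤ a r)
    (ha_bdd : ∃ M : ℝ, ∀ r : ℝ, 0 ≤ r → a r ≤ M)
    (ha_meas : Measurable a)
    (ha_supp : ∀ r : ℝ, K < r → a r = 0)
    (ha_cont : ContinuousAt a 0)
    (ha_one : a 0 = 1)
    (v : EuclideanSpace ℝ (Fin d)) (hv : ‖v‖ = 1)
    (𝓗 : ℝ) (h𝓗 : 0 < 𝓗) :
    ∃ C > (0:ℝ), ∀ l ∈ Set.Ioc (0:ℝ) 1, ∀ δ ∈ Set.Ioc (0:ℝ) 1,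
      C * l ^ (1 - 2 * α) ≤
        ∫ k : EuclideanSpace ℝ (Fin d),
          (l + (1 / l) * (⟪v, k⟫ ^ 2 + δ ^ 2 * ‖k‖ ^ 2 * 𝓗))⁻¹ *
            (a ‖k‖ * ‖k‖ ^ (-(2 * α + (d : ℝ) - 2))) := by
  classical
  obtain ⟨M, hM⟩ := ha_bdd
  have hd1 : 1 ≤ d := le_trans one_le_two hd
  have hdr : (2:ℝ) ≤ (d:ℝ) := by exact_mod_cast hd
  have hd0 : (0:ℝ) < (d:ℝ) := by linarith
  -- continuity at 0 gives a neighborhood where a ≥ 1/2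
  have hmem : Set.Ioi (1/2 : ℝ) ∈ nhds (a 0) := by
    rw [ha_one]; exact Ioi_mem_nhds (by norm_num)
  have hev : ∀ᶠ x in nhds (0:ℝ), a x ∈ Set.Ioi (1/2:ℝ) := ha_cont.eventually_mem hmem
  obtain ⟨ε, hε0, hεball⟩ := Metric.eventually_nhds_iff.mp hev
  -- choice of the radius parameter ρ
  set ρ : ℝ := min (ε/2) (min 1 (min K (1/(1+𝓗)))) with hρdef
  have hρ0 : 0 < ρ :=
    lt_min (by linarith) (lt_min one_pos (lt_min hK (by positivity)))
  have hρε : ρ < ε := lt_of_le_of_lt (min_le_left _ _) (by linarith)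
  have hρ1 : ρ ≤ 1 := (min_le_right _ _).trans (min_le_left _ _)
  have hρK : ρ ≤ K := (min_le_right _ _).trans ((min_le_right _ _).trans (min_le_left _ _))
  have hρH : ρ ≤ 1/(1+𝓗) :=
    (min_le_right _ _).trans ((min_le_right _ _).trans (min_le_right _ _))
  have hρ2H : ρ^2 * 𝓗 ≤ 1 := by
    have h1 : ρ * (1+𝓗) ≤ 1 := by
      rw [← le_div_iff₀ (by linarith)]; exact hρH
    nlinarith [hρ0.le, hρ1, h𝓗.le]
  -- the exponent
  set p : ℝ := -(2 * α + (d : ℝ) - 2) with hpdef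
  have hp : p < 0 := by rw [hpdef]; linarith
  have hpd : -(d:ℝ) < p := by rw [hpdef]; linarith
  have hdp : (d:ℝ) + p = 2 - 2*α := by rw [hpdef]; ring
  have h2α : (0:ℝ) < 2 - 2*α := by linarith
  set B : ℝ := (volume (Metric.ball (0 : EuclideanSpace ℝ (Fin d)) 1)).toReal with hBdef
  have hB0 : 0 < B :=
    ENNReal.toReal_pos (Metric.measure_ball_pos _ _ one_pos).ne' measure_ball_lt_top.ne
  have hρp : 0 < ρ ^ (2 - 2*α) := Real.rpow_pos_of_pos hρ0 _
  refine ⟨6⁻¹ * ((d:ℝ) * B * ρ ^ (2-2*α) * (2-2*α)⁻¹), ?_, ?_⟩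
  · exact mul_pos (by norm_num)
      (mul_pos (mul_pos (mul_pos hd0 hB0) hρp) (inv_pos.mpr h2α))
  intro l hl δ hδ
  obtain ⟨hl0, hl1⟩ := hl
  obtain ⟨hδ0, hδ1⟩ := hδ
  set g : EuclideanSpace ℝ (Fin d) → ℝ := fun k =>
    (l + (1 / l) * (⟪v, k⟫ ^ 2 + δ ^ 2 * ‖k‖ ^ 2 * 𝓗))⁻¹ * (a ‖k‖ * ‖k‖ ^ p) with hgdef
  have hden_pos : ∀ k : EuclideanSpace ℝ (Fin d),
      0 < l + (1 / l) * (⟪v, k⟫ ^ 2 + δ ^ 2 * ‖k‖ ^ 2 * 𝓗) := by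
    intro k
    have h1 : (0:ℝ) ≤ ⟪v, k⟫ ^ 2 + δ ^ 2 * ‖k‖ ^ 2 * 𝓗 := by positivity
    have h2 : (0:ℝ) ≤ 1 / l := by positivity
    exact add_pos_of_pos_of_nonneg hl0 (mul_nonneg h2 h1)
  have hg_nonneg : ∀ k, 0 ≤ g k := by
    intro k
    apply mul_nonneg (inv_nonneg.mpr (hden_pos k).le)
    exact mul_nonneg (ha_nonneg _ (norm_nonneg k)) (Real.rpow_nonneg (norm_nonneg k) p)
  have hg_meas : Measurable g := by
    apply Measurable.mul
    · apply Measurable.inv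
      apply Measurable.add measurable_const
      apply Measurable.const_mul
      exact (((continuous_const.inner continuous_id).measurable).pow_const 2).add
        (((measurable_norm.pow_const 2).const_mul (δ^2)).mul_const 𝓗)
    · exact (ha_meas.comp measurable_norm).mul (by fun_prop)
  -- integrable majorant
  set G : EuclideanSpace ℝ (Fin d) → ℝ :=
    Set.indicator (Metric.closedBall 0 K) (fun k => l⁻¹ * (M * ‖k‖ ^ p)) with hGdef
  have hG_int : Integrable G := by
    rw [hGdef, integrable_indicator_iff measurableSet_closedBall]
    have := (aux_integrableOn_rpow d hd1 hp hpd K).const_mul (l⁻¹ * M)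
    simpa [mul_assoc, IntegrableOn] using this
  have hbound : ∀ k, ‖g k‖ ≤ G k := by
    intro k
    rw [Real.norm_of_nonneg (hg_nonneg k)]
    by_cases hk : ‖k‖ ≤ K
    · rw [hGdef, Set.indicator_of_mem (by simpa [Metric.mem_closedBall, dist_zero_right] using hk)]
      apply mul_le_mul
      · exact inv_anti₀ hl0 (le_add_of_nonneg_right (by positivity))
      · exact mul_le_mul_of_nonneg_right (hM _ (norm_nonneg k))
          (Real.rpow_nonneg (norm_nonneg k) p)
      · exact mul_nonneg (ha_nonneg _ (norm_nonneg k)) (Real.rpow_nonneg (norm_nonneg k) p)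
      · positivity
    · rw [hGdef, Set.indicator_of_notMem
        (by simpa [Metric.mem_closedBall, dist_zero_right] using hk)]
      rw [hgdef]
      simp only []
      rw [ha_supp _ (not_le.mp hk), zero_mul, mul_zero]
  have hg_int : Integrable g := hG_int.mono' hg_meas.aestronglyMeasurable (ae_of_all _ hbound)
  -- the minorant
  set h : EuclideanSpace ℝ (Fin d) → ℝ :=
    Set.indicator (Metric.ball 0 (ρ*l)) (fun k => (3*l)⁻¹ * (2⁻¹ * ‖k‖ ^ p)) with hhdef
  have hh_int : Integrable h := by
    rw [hhdef, integrable_indicator_iff measurableSet_ball]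
    have := ((aux_integrableOn_rpow d hd1 hp hpd (ρ*l)).mono_set
      Metric.ball_subset_closedBall).const_mul ((3*l)⁻¹ * 2⁻¹)
    simpa [mul_assoc, IntegrableOn] using this
  have hh_le : ∀ k, h k ≤ g k := by
    intro k
    by_cases hk : k ∈ Metric.ball (0 : EuclideanSpace ℝ (Fin d)) (ρ*l)
    · rw [hhdef, Set.indicator_of_mem hk]
      have hnk : ‖k‖ < ρ * l := by simpa [Metric.mem_ball, dist_zero_right] using hk
      have hρl_le : ρ * l ≤ l := mul_le_of_le_one_left hl0.le hρ1
      have hkl : ‖k‖ ≤ l := le_of_lt (lt_of_lt_of_le hnk hρl_le)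
      have hinn : ⟪v, k⟫ ^ 2 ≤ l ^ 2 := by
        have habs := abs_real_inner_le_norm v k
        rw [hv, one_mul] at habs
        have h' : |⟪v, k⟫| ≤ l := habs.trans hkl
        calc ⟪v, k⟫ ^ 2 = |⟪v, k⟫| ^ 2 := (sq_abs _).symm
          _ ≤ l ^ 2 := pow_le_pow_left₀ (abs_nonneg _) h' 2
      have hnorm2 : ‖k‖^2 ≤ (ρ*l)^2 := pow_le_pow_left₀ (norm_nonneg k) hnk.le 2
      have hδ2 : δ^2 ≤ 1 := pow_le_one₀ hδ0.le hδ1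
      have hnoise : δ ^ 2 * ‖k‖ ^ 2 * 𝓗 ≤ l ^ 2 := by
        have s1 : δ ^ 2 * ‖k‖ ^ 2 ≤ 1 * (ρ*l)^2 :=
          mul_le_mul hδ2 hnorm2 (sq_nonneg _) zero_le_one
        have s2 : δ ^ 2 * ‖k‖ ^ 2 * 𝓗 ≤ (ρ*l)^2 * 𝓗 := by
          rw [one_mul] at s1
          exact mul_le_mul_of_nonneg_right s1 h𝓗.le
        have s3 : (ρ*l)^2 * 𝓗 = (ρ^2*𝓗) * l^2 := by ring
        have s4 : (ρ^2*𝓗) * l^2 ≤ 1 * l^2 := mul_le_mul_of_nonneg_right hρ2H (sq_nonneg l)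
        rw [s3] at s2
        rw [one_mul] at s4
        exact s2.trans s4
      have hden_le : l + (1 / l) * (⟪v, k⟫ ^ 2 + δ ^ 2 * ‖k‖ ^ 2 * 𝓗) ≤ 3 * l := by
        have h1 : ⟪v, k⟫ ^ 2 + δ ^ 2 * ‖k‖ ^ 2 * 𝓗 ≤ 2 * l^2 := by linarith
        have h2 : (1/l) * (⟪v, k⟫ ^ 2 + δ ^ 2 * ‖k‖ ^ 2 * 𝓗) ≤ (1/l) * (2*l^2) :=
          mul_le_mul_of_nonneg_left h1 (by positivity)
        have h3 : (1/l) * (2*l^2) = 2*l := by field_simp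
        linarith
      have hA : (3*l)⁻¹ ≤ (l + (1 / l) * (⟪v, k⟫ ^ 2 + δ ^ 2 * ‖k‖ ^ 2 * 𝓗))⁻¹ :=
        inv_anti₀ (hden_pos k) hden_le
      have hahalf : 2⁻¹ ≤ a ‖k‖ := by
        have hdist : dist ‖k‖ (0:ℝ) < ε := by
          rw [Real.dist_eq, sub_zero, abs_of_nonneg (norm_nonneg k)]
          calc ‖k‖ < ρ * l := hnk
            _ ≤ ρ := mul_le_of_le_one_right hρ0.le hl1
            _ < ε := hρε
        have := hεball hdist
        rw [Set.mem_Ioi] at this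
        linarith
      rw [hgdef]
      apply mul_le_mul hA
      · exact mul_le_mul_of_nonneg_right hahalf (Real.rpow_nonneg (norm_nonneg k) p)
      · exact mul_nonneg (by norm_num) (Real.rpow_nonneg (norm_nonneg k) p)
      · exact inv_nonneg.mpr (hden_pos k).le
    · rw [hhdef, Set.indicator_of_notMem hk]
      exact hg_nonneg k
  -- compute the integral of the minorant
  have hsplit : h = fun k => ((3*l)⁻¹ * 2⁻¹) *
      Set.indicator (Metric.ball 0 (ρ*l))
        (fun k : EuclideanSpace ℝ (Fin d) => ‖k‖ ^ p) k := by
    funext k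
    by_cases hk : k ∈ Metric.ball (0 : EuclideanSpace ℝ (Fin d)) (ρ*l)
    · rw [hhdef, Set.indicator_of_mem hk, Set.indicator_of_mem hk]; ring
    · rw [hhdef, Set.indicator_of_notMem hk, Set.indicator_of_notMem hk, mul_zero]
  have hInth : (∫ k, h k) = ((3*l)⁻¹ * 2⁻¹) *
      ((d:ℝ) * B * ((ρ*l) ^ ((d:ℝ) + p) / ((d:ℝ) + p))) := by
    rw [hsplit, integral_const_mul,
      aux_integral_rpow_ball d hd1 hp hpd (mul_pos hρ0 hl0), ← hBdef]
  have hfinal : 6⁻¹ * ((d:ℝ) * B * ρ ^ (2-2*α) * (2-2*α)⁻¹) * l ^ (1 - 2*α) = ∫ k, h k := by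
    rw [hInth, hdp]
    rw [Real.mul_rpow hρ0.le hl0.le]
    have hl2 : l ^ ((2:ℝ)-2*α) = l * l ^ ((1:ℝ)-2*α) := by
      rw [show (2:ℝ)-2*α = 1 + (1-2*α) by ring, Real.rpow_add hl0, Real.rpow_one]
    rw [hl2]
    field_simp
    ring
  calc 6⁻¹ * ((d:ℝ) * B * ρ ^ (2-2*α) * (2-2*α)⁻¹) * l ^ (1 - 2*α)
      = ∫ k, h k := hfinal
    _ ≤ ∫ k, g k := integral_mono hh_int hg_int hh_le
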